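/- For any triangle ABC inscribed in a circle of radius R, and any point M in the plane, the pedal triangle A₁B₁C₁ of M (feet of perpendiculars from M to lines BC, CA, AB) has side lengths B₁C₁ = (a/(2R))·AM, C₁A₁ = (b/(2R))·BM, A₁B₁ = (c/(2R))·CM, where a = BC, b = CA, c = AB. -/

import Mathlib

open EuclideanGeometry RealInnerProductSpace

theorem sines_id (A0 A1 B0 B1 C0 C1 R : ℝ) (hA : A0^2 + A1^2 = R^2)
    (hB : B0^2 + B1^2 = R^2) (hC : C0^2 + C1^2 = R^2) :
    4*R^2*((C0-A0)*(B1-A1)-(C1-A1)*(B0-A0))^2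
      = ((B0-C0)^2+(B1-C1)^2) * (((C0-A0)^2+(C1-A1)^2) * ((B0-A0)^2+(B1-A1)^2)) := by
  linear_combination (- A0^2*B0^2 + 2*A0^2*B0*C0 - A0^2*B1^2 + 2*A0^2*B1*C1 - A0^2*C0^2 - A0^2*C1^2 + 2*A0*B0^3 - 2*A0*B0^2*C0 + 2*A0*B0*B1^2 - 4*A0*B0*B1*C1 - 2*A0*B0*C0^2 + 2*A0*B0*C1^2 + 2*A0*B1^2*C0 - 4*A0*B1*C0*C1 + 2*A0*C0^3 + 2*A0*C0*C1^2 - A1^2*B0^2 + 2*A1^2*B0*C0 - A1^2*B1^2 + 2*A1^2*B1*C1 - A1^2*C0^2 - A1^2*C1^2 + 2*A1*B0^2*B1 + 2*A1*B0^2*C1 - 4*A1*B0*B1*C0 - 4*A1*B0*C0*C1 + 2*A1*B1^3 - 2*A1*B1^2*C1 + 2*A1*B1*C0^2 - 2*A1*B1*C1^2 + 2*A1*C0^2*C1 + 2*A1*C1^3 - B0^4 - 2*B0^3*C0 - 2*B0^2*B1^2 + 2*B0^2*B1*C1 + 6*B0^2*C0^2 - 2*B0^2*C1^2 - B0^2*R^2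 - 2*B0*B1^2*C0 + 8*B0*B1*C0*C1 - 2*B0*C0^3 - 2*B0*C0*C1^2 + 2*B0*C0*R^2 - B1^4 + 2*B1^3*C1 - 2*B1^2*C0^2 - 2*B1^2*C1^2 + 3*B1^2*R^2 + 2*B1*C0^2*C1 + 2*B1*C1^3 - 6*B1*C1*R^2 - C0^4 - 2*C0^2*C1^2 - C0^2*R^2 - C1^4 + 3*C1^2*R^2) * hA + (- 4*A0*A1*B0*C1 - 4*A0*A1*B1*C0 + 8*A0*A1*C0*C1 + 2*A0*B0^2*C0 - 2*A0*B0*C0^2 + 2*A0*B0*C1^2 + 2*A0*B0*R^2 + 2*A0*B1^2*C0 - 4*A0*B1*C0*C1 - 2*A0*C0^3 - 2*A0*C0*C1^2 + 4*A1^2*B0*C0 - 4*A1^2*B1*C1 - 8*A1^2*C0^2 + 4*A1^2*R^2 + 2*A1*B0^2*C1 - 4*A1*B0*C0*C1 + 2*A1*B1^2*C1 + 2*A1*B1*C0^2 - 2*A1*B1*C1^2 + 2*A1*B1*R^2 + 2*A1*C0^2*C1 + 2*A1*C1^3 - 4*A1*C1*R^2 - B0^2*C0^2 - B0^2*C1^2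 - B0^2*R^2 + 2*B0*C0^3 + 2*B0*C0*C1^2 - 2*B0*C0*R^2 - B1^2*C0^2 - B1^2*C1^2 - B1^2*R^2 + 2*B1*C0^2*C1 + 2*B1*C1^3 + 2*B1*C1*R^2 - C0^4 - 2*C0^2*C1^2 + 5*C0^2*R^2 - C1^4 + C1^2*R^2 - 2*R^4) * hB + (8*A0*A1*B0*B1 - 4*A0*A1*B0*C1 - 4*A0*A1*B1*C0 - 4*A0*B0*B1*C1 + 2*A0*B0*C0^2 + 2*A0*B0*C1^2 - 2*A0*B0*R^2 + 4*A0*B1^2*C0 + 4*A1^2*B0*C0 + 8*A1^2*B1^2 - 4*A1^2*B1*C1 - 4*A1^2*R^2 - 4*A1*B0*B1*C0 - 4*A1*B1^2*C1 + 2*A1*B1*C0^2 + 2*A1*B1*C1^2 - 2*A1*B1*R^2 + 4*A1*C1*R^2 - 4*B1^2*R^2 + 4*B1*C1*R^2 - 2*C0^2*R^2 - 2*C1^2*R^2 + 2*R^4) * hC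

set_option maxHeartbeats 1000000 in
theorem pedal_sq (u0 u1 v0 v1 w0 w1 ρ τ X Y : ℝ)
    (hu : u0^2 + u1^2 ≠ 0) (hv : v0^2 + v1^2 ≠ 0)
    (hX : X = ρ * u0 - τ * v0) (hY : Y = ρ * u1 - τ * v1)
    (hρ : ρ * (u0^2 + u1^2) = w0*u0 + w1*u1)
    (hτ : τ * (v0^2 + v1^2) = w0*v0 + w1*v1) :
    (X^2 + Y^2) * ((u0^2 + u1^2) * (v0^2 + v1^2))
      = (u0*v1 - u1*v0)^2 * (w0^2 + w1^2) := by
  subst hX hY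
  have hG0 : (u0^2 + u1^2) * (v0^2 + v1^2) * (ρ * u0 - τ * v0)
      = (w0*u0 + w1*u1)*u0*(v0^2 + v1^2) - (w0*v0 + w1*v1)*v0*(u0^2 + u1^2) := by
    linear_combination (u0*(v0^2 + v1^2)) * hρ - (v0*(u0^2 + u1^2)) * hτ
  have hG1 : (u0^2 + u1^2) * (v0^2 + v1^2) * (ρ * u1 - τ * v1)
      = (w0*u0 + w1*u1)*u1*(v0^2 + v1^2) - (w0*v0 + w1*v1)*v1*(u0^2 + u1^2) := by
    linear_combination (u1*(v0^2 + v1^2)) * hρ - (v1*(u0^2 + u1^2)) * hτ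
  have hnz : (u0^2 + u1^2) * (v0^2 + v1^2) ≠ 0 := mul_ne_zero hu hv
  apply mul_right_cancel₀ hnz
  linear_combination
      ((u0^2 + u1^2) * (v0^2 + v1^2) * (ρ * u0 - τ * v0)
        + ((w0*u0 + w1*u1)*u0*(v0^2 + v1^2) - (w0*v0 + w1*v1)*v0*(u0^2 + u1^2))) * hG0
    + ((u0^2 + u1^2) * (v0^2 + v1^2) * (ρ * u1 - τ * v1)
        + ((w0*u0 + w1*u1)*u1*(v0^2 + v1^2) - (w0*v0 + w1*v1)*v1*(u0^2 + u1^2))) * hG1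

set_option maxHeartbeats 1000000 in
theorem key_real (A0 A1 B0 B1 C0 C1 M0 M1 P0 P1 Q0 Q1 R σ τ : ℝ)
    (hA : A0^2 + A1^2 = R^2) (hB : B0^2 + B1^2 = R^2) (hC : C0^2 + C1^2 = R^2)
    (hu : (A0-C0)^2 + (A1-C1)^2 ≠ 0) (hv : (B0-A0)^2 + (B1-A1)^2 ≠ 0)
    (hP0 : P0 = σ * (A0 - C0) + C0) (hP1 : P1 = σ * (A1 - C1) + C1)
    (hP' : (M0 - P0) * (A0 - C0) + (M1 - P1) * (A1 - C1) = 0)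
    (hQ0 : Q0 = τ * (B0 - A0) + A0) (hQ1 : Q1 = τ * (B1 - A1) + A1)
    (hQ' : (M0 - Q0) * (B0 - A0) + (M1 - Q1) * (B1 - A1) = 0) :
    ((P0-Q0)^2 + (P1-Q1)^2) * (4*R^2) = ((B0-C0)^2+(B1-C1)^2) * ((M0-A0)^2+(M1-A1)^2) := by
  have hρ : (σ - 1) * ((A0-C0)^2 + (A1-C1)^2)
      = (M0-A0)*(A0-C0) + (M1-A1)*(A1-C1) := by
    rw [hP0, hP1] at hP'; linear_combination -hP'
  have hτ' : τ * ((B0-A0)^2 + (B1-A1)^2)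
      = (M0-A0)*(B0-A0) + (M1-A1)*(B1-A1) := by
    rw [hQ0, hQ1] at hQ'; linear_combination -hQ'
  have hXd : P0 - Q0 = (σ - 1) * (A0-C0) - τ * (B0-A0) := by
    rw [hP0, hQ0]; ring
  have hYd : P1 - Q1 = (σ - 1) * (A1-C1) - τ * (B1-A1) := by
    rw [hP1, hQ1]; ring
  have hped := pedal_sq (A0-C0) (A1-C1) (B0-A0) (B1-A1) (M0-A0) (M1-A1) (σ-1) τ
    (P0-Q0) (P1-Q1) hu hv hXd hYd hρ hτ'
  have hsin := sines_id A0 A1 B0 B1 C0 C1 R hA hB hC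
  have hcross : (A0-C0)*(B1-A1) - (A1-C1)*(B0-A0)
      = -((C0-A0)*(B1-A1)-(C1-A1)*(B0-A0)) := by ring
  rw [hcross] at hped
  have hnz : ((A0-C0)^2 + (A1-C1)^2) * ((B0-A0)^2 + (B1-A1)^2) ≠ 0 := mul_ne_zero hu hv
  apply mul_right_cancel₀ hnz
  calc ((P0-Q0)^2 + (P1-Q1)^2) * (4*R^2) * (((A0-C0)^2 + (A1-C1)^2) * ((B0-A0)^2 + (B1-A1)^2))
      = (4*R^2) * (((P0-Q0)^2 + (P1-Q1)^2) * (((A0-C0)^2 + (A1-C1)^2) * ((B0-A0)^2 + (B1-A1)^2))) := by ring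
    _ = (4*R^2) * ((-((C0-A0)*(B1-A1)-(C1-A1)*(B0-A0)))^2 * ((M0-A0)^2+(M1-A1)^2)) := by rw [hped]
    _ = (4*R^2*((C0-A0)*(B1-A1)-(C1-A1)*(B0-A0))^2) * ((M0-A0)^2+(M1-A1)^2) := by ring
    _ = (((B0-C0)^2+(B1-C1)^2) * (((C0-A0)^2+(C1-A1)^2) * ((B0-A0)^2+(B1-A1)^2))) * ((M0-A0)^2+(M1-A1)^2) := by rw [hsin]
    _ = ((B0-C0)^2+(B1-C1)^2) * ((M0-A0)^2+(M1-A1)^2) * (((A0-C0)^2 + (A1-C1)^2) * ((B0-A0)^2 + (B1-A1)^2)) := by ring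


theorem dist_sq_coord (x y : EuclideanSpace ℝ (Fin 2)) :
    dist x y ^ 2 = (x 0 - y 0)^2 + (x 1 - y 1)^2 := by
  rw [EuclideanSpace.dist_eq, Real.sq_sqrt (by positivity)]
  simp [Fin.sum_univ_two, Real.dist_eq, sq_abs]

theorem mem_span_pair' (p c a : EuclideanSpace ℝ (Fin 2))
    (h : p ∈ affineSpan ℝ ({c, a} : Set (EuclideanSpace ℝ (Fin 2)))) :
    ∃ r : ℝ, p = r • (a - c) + c := by
  have hd : p -ᵥ c ∈ vectorSpan ℝ ({c, a} : Set (EuclideanSpace ℝ (Fin 2))) := by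
    rw [← direction_affineSpan]
    exact AffineSubspace.vsub_mem_direction h (mem_affineSpan ℝ (Set.mem_insert _ _))
  obtain ⟨r, hr⟩ := mem_vectorSpan_pair_rev.mp hd
  rw [vsub_eq_sub] at hr
  exact ⟨r, sub_eq_iff_eq_add.mp hr.symm⟩

theorem inner_coord (m p a c : EuclideanSpace ℝ (Fin 2)) (h : ⟪m - p, a - c⟫ = 0) :
    (m 0 - p 0) * (a 0 - c 0) + (m 1 - p 1) * (a 1 - c 1) = 0 := by
  simp [PiLp.inner_apply, Fin.sum_univ_two, RCLike.inner_apply, conj_trivial] at h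
  linear_combination h

theorem pedal (a b c m p q o : EuclideanSpace ℝ (Fin 2)) (R : ℝ) (hR : 0 < R)
    (hoa : dist o a = R) (hob : dist o b = R) (hoc : dist o c = R)
    (hac : a ≠ c) (hab : a ≠ b)
    (hp : p ∈ affineSpan ℝ ({c, a} : Set (EuclideanSpace ℝ (Fin 2))))
    (hp' : ⟪m - p, a - c⟫ = 0)
    (hq : q ∈ affineSpan ℝ ({a, b} : Set (EuclideanSpace ℝ (Fin 2))))
    (hq' : ⟪m - q, b - a⟫ = 0) :
    dist p q = dist b c / (2*R) * dist a m := by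
  obtain ⟨σ, hσ⟩ := mem_span_pair' p c a hp
  obtain ⟨τ, hτ⟩ := mem_span_pair' q a b hq
  have hp0 : p 0 = σ * (a 0 - c 0) + c 0 := by rw [hσ]; simp
  have hp1 : p 1 = σ * (a 1 - c 1) + c 1 := by rw [hσ]; simp
  have hq0 : q 0 = τ * (b 0 - a 0) + a 0 := by rw [hτ]; simp
  have hq1 : q 1 = τ * (b 1 - a 1) + a 1 := by rw [hτ]; simp
  have hpc := inner_coord m p a c hp'
  have hqc := inner_coord m q b a hq'
  have hA : (a 0 - o 0)^2 + (a 1 - o 1)^2 = R^2 := by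
    have h := dist_sq_coord o a; rw [hoa] at h; linear_combination -h
  have hB : (b 0 - o 0)^2 + (b 1 - o 1)^2 = R^2 := by
    have h := dist_sq_coord o b; rw [hob] at h; linear_combination -h
  have hC : (c 0 - o 0)^2 + (c 1 - o 1)^2 = R^2 := by
    have h := dist_sq_coord o c; rw [hoc] at h; linear_combination -h
  have hacd : dist a c ^ 2 ≠ 0 := pow_ne_zero _ (dist_ne_zero.mpr hac)
  rw [dist_sq_coord] at hacd
  have habd : dist b a ^ 2 ≠ 0 := pow_ne_zero _ (dist_ne_zero.mpr hab.symm)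
  rw [dist_sq_coord] at habd
  have hu : ((a 0 - o 0) - (c 0 - o 0))^2 + ((a 1 - o 1) - (c 1 - o 1))^2 ≠ 0 := by
    intro h0; exact hacd (by linear_combination h0)
  have hv : ((b 0 - o 0) - (a 0 - o 0))^2 + ((b 1 - o 1) - (a 1 - o 1))^2 ≠ 0 := by
    intro h0; exact habd (by linear_combination h0)
  have key := key_real (a 0 - o 0) (a 1 - o 1) (b 0 - o 0) (b 1 - o 1)
    (c 0 - o 0) (c 1 - o 1) (m 0 - o 0) (m 1 - o 1)
    (p 0 - o 0) (p 1 - o 1) (q 0 - o 0) (q 1 - o 1) R σ τ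
    hA hB hC hu hv
    (by linear_combination hp0) (by linear_combination hp1)
    (by linear_combination hpc)
    (by linear_combination hq0) (by linear_combination hq1)
    (by linear_combination hqc)
  have h2R : (2*R) ≠ 0 := by positivity
  rw [div_mul_eq_mul_div, eq_div_iff h2R]
  have hsq : (dist p q * (2*R))^2 = (dist b c * dist a m)^2 := by
    calc (dist p q * (2*R))^2 = (dist p q ^ 2) * (4*R^2) := by ring
      _ = ((p 0 - q 0)^2 + (p 1 - q 1)^2) * (4*R^2) := by rw [dist_sq_coord p q]
      _ = (dist b c ^ 2) * (dist a m ^ 2) := by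
          rw [dist_sq_coord b c, dist_sq_coord a m]; linear_combination key
      _ = (dist b c * dist a m)^2 := by ring
  have h1 : 0 ≤ dist p q * (2*R) := by positivity
  have h2 : 0 ≤ dist b c * dist a m := by positivity
  rw [← Real.sqrt_sq h1, ← Real.sqrt_sq h2, hsq]

theorem stmt_12 (a b c m a₁ b₁ c₁ o : EuclideanSpace ℝ (Fin 2)) (R : ℝ)
    (hnc : ¬ Collinear ℝ ({a, b, c} : Set (EuclideanSpace ℝ (Fin 2))))
    (hoa : dist o a = R) (hob : dist o b = R) (hoc : dist o c = R)
    (ha₁ : a₁ ∈ affineSpan ℝ ({b, c} : Set (EuclideanSpace ℝ (Fin 2))))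
    (ha₁' : ⟪m - a₁, c - b⟫ = 0)
    (hb₁ : b₁ ∈ affineSpan ℝ ({c, a} : Set (EuclideanSpace ℝ (Fin 2))))
    (hb₁' : ⟪m - b₁, a - c⟫ = 0)
    (hc₁ : c₁ ∈ affineSpan ℝ ({a, b} : Set (EuclideanSpace ℝ (Fin 2))))
    (hc₁' : ⟪m - c₁, b - a⟫ = 0) :
    dist b₁ c₁ = dist b c / (2 * R) * dist a m ∧
    dist c₁ a₁ = dist c a / (2 * R) * dist b m ∧
    dist a₁ b₁ = dist a b / (2 * R) * dist c m := by
  have hab : a ≠ b := by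
    rintro rfl
    exact hnc ((collinear_pair ℝ a c).subset (by intro z hz; simp at hz ⊢; tauto))
  have hac : a ≠ c := by
    rintro rfl
    exact hnc ((collinear_pair ℝ a b).subset (by intro z hz; simp at hz ⊢; tauto))
  have hbc : b ≠ c := by
    rintro rfl
    exact hnc ((collinear_pair ℝ a b).subset (by intro z hz; simp at hz ⊢; tauto))
  have hR0 : 0 ≤ R := hoa ▸ dist_nonneg
  have hR : 0 < R := by
    rcases hR0.lt_or_eq with h | h
    · exact h
    · exfalso
      apply hab
      have h1 : dist o a = 0 := by rw [hoa, ← h]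
      have h2 : dist o b = 0 := by rw [hob, ← h]
      rw [dist_eq_zero] at h1 h2
      rw [← h1, ← h2]
  exact ⟨pedal a b c m b₁ c₁ o R hR hoa hob hoc hac hab hb₁ hb₁' hc₁ hc₁',
    pedal b c a m c₁ a₁ o R hR hob hoc hoa hab.symm hbc hc₁ hc₁' ha₁ ha₁',
    pedal c a b m a₁ b₁ o R hR hoc hoa hob hbc.symm hac.symm ha₁ ha₁' hb₁ hb₁'⟩
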